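/- arXiv:2212.10302 — 2 statements merged into one kernel-verified Lean document; each statement's English description precedes it below -/
import Mathlib

section
/- Let η : O → ℝ be a C² entropy for the smooth flux G_α : O → ℝⁿ (α = 1,…,d) with entropy fluxes Q_α : O → ℝ, i.e. DQ_α(U) = Dη(U) · DG_α(U) for all U ∈ O. If U₁ and U₂ are C¹ solutions on [0,T] × ℝ^d of ∂ₜUᵢ + ∂_α G_α(Uᵢ) = ξᵢ Π(Uᵢ), then the relative entropy h = η(U₁) − η(U₂) − Dη(U₂)·(U₁−U₂) satisfies the identity: ∂ₜh + ∂_α( Q_α(U₁) − Q_α(U₂) − Dη(U₂)·(G_α(U₁) − G_α(U₂)) ) = ξ₁(Dη(U₁) − Dη(U₂))·Π(U₁) − ξ₂ (U₁−U₂)·D²η(U₂)·Π(U₂) − ∂_α U₂ · D²η(U₂) · ( G_α(U₁) − G_α(U₂) − DG_α(U₂)·(U₁−U₂) ). -/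
open Set Function

theorem mixed_symm {E : Type*} [NormedAddCommGroup E] [NormedSpace ℝ E]
    {η : E → ℝ} {G : E → E} {Q : E → ℝ}
    (hη : ContDiff ℝ 2 η) (hG : ContDiff ℝ 2 G) (hQ : ContDiff ℝ 1 Q)
    (hc : ∀ U V, fderiv ℝ Q U V = fderiv ℝ η U (fderiv ℝ G U V)) (U v w : E) :
    fderiv ℝ (fderiv ℝ η) U v (fderiv ℝ G U w)
      = fderiv ℝ (fderiv ℝ η) U w (fderiv ℝ G U v) := by
  have hη' : ContDiff ℝ 1 (fderiv ℝ η) := hη.fderiv_right (by norm_num)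
  have hG' : ContDiff ℝ 1 (fderiv ℝ G) := hG.fderiv_right (by norm_num)
  set B : E → E →L[ℝ] ℝ := fun W => (fderiv ℝ η W).comp (fderiv ℝ G W) with hB
  have hfQ : fderiv ℝ Q = B := funext fun W => ContinuousLinearMap.ext fun V => hc W V
  have hBd : HasFDerivAt B
      ((ContinuousLinearMap.compL ℝ E E ℝ (fderiv ℝ η U)).comp (fderiv ℝ (fderiv ℝ G) U)
        + ((ContinuousLinearMap.compL ℝ E E ℝ).flip (fderiv ℝ G U)).comp
            (fderiv ℝ (fderiv ℝ η) U)) U :=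
    HasFDerivAt.clm_comp ((hη'.differentiable one_ne_zero U).hasFDerivAt)
      ((hG'.differentiable one_ne_zero U).hasFDerivAt)
  have hQd : ∀ y, HasFDerivAt Q (B y) y := fun y => by
    rw [← hfQ]; exact ((hQ.differentiable one_ne_zero) y).hasFDerivAt
  have symQ := second_derivative_symmetric hQd hBd v w
  have symG := second_derivative_symmetric
    (fun y => ((hG.differentiable (by norm_num)) y).hasFDerivAt)
    ((hG'.differentiable one_ne_zero U).hasFDerivAt) v w
  simp only [ContinuousLinearMap.add_apply, ContinuousLinearMap.comp_apply,
    ContinuousLinearMap.compL_apply, ContinuousLinearMap.flip_apply] at symQ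
  rw [symG] at symQ
  linarith

/-- Dafermos's relative-entropy identity for two classical solutions of
∂ₜU + ∂_α G_α(U) = ξ Π(U) with relaxation parameters ξ₁, ξ₂ and an entropy pair
(η, Q_α) satisfying DQ_α = Dη·DG_α. -/
theorem stmt_11
    (n d : ℕ) (ξ₁ ξ₂ : ℝ)
    (η : EuclideanSpace ℝ (Fin n) → ℝ)
    (Gf : Fin d → EuclideanSpace ℝ (Fin n) → EuclideanSpace ℝ (Fin n))
    (Q : Fin d → EuclideanSpace ℝ (Fin n) → ℝ)
    (Pi : EuclideanSpace ℝ (Fin n) → EuclideanSpace ℝ (Fin n))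
    (hη : ContDiff ℝ 2 η) (hGf : ∀ α, ContDiff ℝ 2 (Gf α))
    (hQ : ∀ α, ContDiff ℝ 1 (Q α)) (hPi : Continuous Pi)
    -- compatibility of the entropy pair: DQ_α(U) = Dη(U)·DG_α(U)
    (hcompat : ∀ α U V, fderiv ℝ (Q α) U V = fderiv ℝ η U (fderiv ℝ (Gf α) U V))
    -- two C¹ solutions U₁, U₂ with their time and space partial derivatives
    (U₁ U₂ : ℝ → (Fin d → ℝ) → EuclideanSpace ℝ (Fin n))
    (dtU₁ dtU₂ : ℝ → (Fin d → ℝ) → EuclideanSpace ℝ (Fin n))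
    (dxU₁ dxU₂ : Fin d → ℝ → (Fin d → ℝ) → EuclideanSpace ℝ (Fin n))
    (hdtU₁ : ∀ t x, HasDerivAt (fun s => U₁ s x) (dtU₁ t x) t)
    (hdtU₂ : ∀ t x, HasDerivAt (fun s => U₂ s x) (dtU₂ t x) t)
    (hdxU₁ : ∀ α t x, HasDerivAt (fun r => U₁ t (update x α r)) (dxU₁ α t x) (x α))
    (hdxU₂ : ∀ α t x, HasDerivAt (fun r => U₂ t (update x α r)) (dxU₂ α t x) (x α))
    -- the two systems of balance laws
    (hpde₁ : ∀ t x, dtU₁ t x + ∑ α, fderiv ℝ (Gf α) (U₁ t x) (dxU₁ α t x)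
      = ξ₁ • Pi (U₁ t x))
    (hpde₂ : ∀ t x, dtU₂ t x + ∑ α, fderiv ℝ (Gf α) (U₂ t x) (dxU₂ α t x)
      = ξ₂ • Pi (U₂ t x)) :
    -- the relative entropy h and relative entropy fluxes q_α are differentiable and
    -- satisfy the relative-entropy identity
    ∀ t x, ∃ (ht' : ℝ) (q' : Fin d → ℝ),
      HasDerivAt
        (fun s => η (U₁ s x) - η (U₂ s x) - fderiv ℝ η (U₂ s x) (U₁ s x - U₂ s x))
        ht' t ∧
      (∀ α, HasDerivAt
        (fun r =>
          Q α (U₁ t (update x α r)) - Q α (U₂ t (update x α r))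
            - fderiv ℝ η (U₂ t (update x α r))
                (Gf α (U₁ t (update x α r)) - Gf α (U₂ t (update x α r))))
        (q' α) (x α)) ∧
      ht' + ∑ α, q' α
        = ξ₁ * (fderiv ℝ η (U₁ t x) - fderiv ℝ η (U₂ t x)) (Pi (U₁ t x))
          - ξ₂ * (fderiv ℝ (fderiv ℝ η) (U₂ t x) (U₁ t x - U₂ t x)) (Pi (U₂ t x))
          - ∑ α, (fderiv ℝ (fderiv ℝ η) (U₂ t x) (dxU₂ α t x))
              (Gf α (U₁ t x) - Gf α (U₂ t x)
                - fderiv ℝ (Gf α) (U₂ t x) (U₁ t x - U₂ t x)) := by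
  intro t x
  have dη : Differentiable ℝ η := hη.differentiable (by norm_num)
  have hη' : ContDiff ℝ 1 (fderiv ℝ η) := hη.fderiv_right (by norm_num)
  have dη' : Differentiable ℝ (fderiv ℝ η) := hη'.differentiable one_ne_zero
  have dG : ∀ α, Differentiable ℝ (Gf α) := fun α => (hGf α).differentiable (by norm_num)
  have dQ : ∀ α, Differentiable ℝ (Q α) := fun α => (hQ α).differentiable one_ne_zero
  -- abbreviations
  set A := fderiv ℝ η (U₁ t x) with hA
  set B := fderiv ℝ η (U₂ t x) with hBdef
  set M := fderiv ℝ (fderiv ℝ η) (U₂ t x) with hM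
  -- time derivative
  have h1 : HasDerivAt (fun s => η (U₁ s x)) (A (dtU₁ t x)) t :=
    (dη _).hasFDerivAt.comp_hasDerivAt t (hdtU₁ t x)
  have h2 : HasDerivAt (fun s => η (U₂ s x)) (B (dtU₂ t x)) t :=
    (dη _).hasFDerivAt.comp_hasDerivAt t (hdtU₂ t x)
  have h3 : HasDerivAt (fun s => fderiv ℝ η (U₂ s x)) (M (dtU₂ t x)) t :=
    (dη' _).hasFDerivAt.comp_hasDerivAt t (hdtU₂ t x)
  have h4 : HasDerivAt (fun s => U₁ s x - U₂ s x) (dtU₁ t x - dtU₂ t x) t :=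
    (hdtU₁ t x).sub (hdtU₂ t x)
  have h5 := h3.clm_apply h4
  have ht := (h1.sub h2).sub h5
  -- space derivatives
  have hsp : ∀ α, HasDerivAt
      (fun r =>
        Q α (U₁ t (update x α r)) - Q α (U₂ t (update x α r))
          - fderiv ℝ η (U₂ t (update x α r))
              (Gf α (U₁ t (update x α r)) - Gf α (U₂ t (update x α r))))
      (fderiv ℝ (Q α) (U₁ t x) (dxU₁ α t x) - fderiv ℝ (Q α) (U₂ t x) (dxU₂ α t x)
        - (M (dxU₂ α t x) (Gf α (U₁ t x) - Gf α (U₂ t x))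
            + B (fderiv ℝ (Gf α) (U₁ t x) (dxU₁ α t x)
                  - fderiv ℝ (Gf α) (U₂ t x) (dxU₂ α t x)))) (x α) := by
    intro α
    have g1 := ((dQ α _).hasFDerivAt.comp_hasDerivAt (x α) (hdxU₁ α t x))
    have g2 := ((dQ α _).hasFDerivAt.comp_hasDerivAt (x α) (hdxU₂ α t x))
    have g3 := ((dη' _).hasFDerivAt.comp_hasDerivAt (x α) (hdxU₂ α t x))
    have g4 : HasDerivAt
        (fun r => Gf α (U₁ t (update x α r)) - Gf α (U₂ t (update x α r)))
        (fderiv ℝ (Gf α) (U₁ t x) (dxU₁ α t x)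
          - fderiv ℝ (Gf α) (U₂ t x) (dxU₂ α t x)) (x α) := by
      have a1 := ((dG α _).hasFDerivAt.comp_hasDerivAt (x α) (hdxU₁ α t x))
      have a2 := ((dG α _).hasFDerivAt.comp_hasDerivAt (x α) (hdxU₂ α t x))
      rw [update_eq_self] at a1 a2
      exact a1.sub a2
    rw [update_eq_self] at g1 g2 g3
    have g5 := g3.clm_apply g4
    simp only [Function.comp_apply, update_eq_self] at g5
    exact (g1.sub g2).sub g5
  refine ⟨_, _, ht, hsp, ?_⟩
  -- the algebraic identity
  -- facts from the PDEs
  have e1 : A (dtU₁ t x) + ∑ α, A (fderiv ℝ (Gf α) (U₁ t x) (dxU₁ α t x))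
      = ξ₁ * A (Pi (U₁ t x)) := by
    have := congrArg A (hpde₁ t x)
    simpa [map_add, map_sum, map_smul, smul_eq_mul] using this
  have e2 : B (dtU₁ t x) + ∑ α, B (fderiv ℝ (Gf α) (U₁ t x) (dxU₁ α t x))
      = ξ₁ * B (Pi (U₁ t x)) := by
    have := congrArg B (hpde₁ t x)
    simpa [map_add, map_sum, map_smul, smul_eq_mul] using this
  have e3 : M (dtU₂ t x) (U₁ t x - U₂ t x)
      + ∑ α, M (fderiv ℝ (Gf α) (U₂ t x) (dxU₂ α t x)) (U₁ t x - U₂ t x)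
      = ξ₂ * M (Pi (U₂ t x)) (U₁ t x - U₂ t x) := by
    have h := congrArg M (hpde₂ t x)
    have := congrArg (fun (L : _ →L[ℝ] ℝ) => L (U₁ t x - U₂ t x)) h
    simpa [map_add, map_sum, map_smul, ContinuousLinearMap.add_apply,
      ContinuousLinearMap.sum_apply, ContinuousLinearMap.smul_apply, smul_eq_mul] using this
  -- symmetry facts
  have symη : ∀ v w, M v w = M w v := fun v w =>
    second_derivative_symmetric (fun y => (dη y).hasFDerivAt) (dη' _).hasFDerivAt v w
  have s1 : M (Pi (U₂ t x)) (U₁ t x - U₂ t x) = M (U₁ t x - U₂ t x) (Pi (U₂ t x)) :=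
    symη _ _
  have s2 : ∀ α, M (fderiv ℝ (Gf α) (U₂ t x) (dxU₂ α t x)) (U₁ t x - U₂ t x)
      = M (dxU₂ α t x) (fderiv ℝ (Gf α) (U₂ t x) (U₁ t x - U₂ t x)) := by
    intro α
    rw [symη]
    exact mixed_symm hη (hGf α) (hQ α) (hcompat α) (U₂ t x) (U₁ t x - U₂ t x) (dxU₂ α t x)
  have s2' : ∑ α, M (fderiv ℝ (Gf α) (U₂ t x) (dxU₂ α t x)) (U₁ t x - U₂ t x)
      = ∑ α, M (dxU₂ α t x) (fderiv ℝ (Gf α) (U₂ t x) (U₁ t x - U₂ t x)) :=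
    Finset.sum_congr rfl fun α _ => s2 α
  have s1' : ξ₂ * M (Pi (U₂ t x)) (U₁ t x - U₂ t x)
      = ξ₂ * M (U₁ t x - U₂ t x) (Pi (U₂ t x)) := by rw [s1]
  simp only [hcompat, ← hA, ← hBdef]
  simp only [map_sub, ContinuousLinearMap.sub_apply, Finset.sum_sub_distrib,
    Finset.sum_add_distrib, mul_sub] at e1 e2 e3 s1' s2' ⊢
  linarith [e1, e2, e3, s1', s2']
end

section
/- Let d ≥ 1, u : ℝ^d → ℝ^d and F : ℝ^d → GL(d,ℝ) smooth fields, and ρ > 0 smooth with ∂ₜρ + div(ρu) = 0. Suppose ρF satisfies the conservation law ∂ₜ(ρ F^{jα}) + ∂_i( ρ(u^i F^{jα} − u^j F^{iα}) ) = 0 (componentwise form of ∂ₜ(ρF) − ∇×(ρFᵀ×u) = 0) together with the Piola identity ∂_i(ρ F^{iα}) = 0 for each α. Then F satisfies the transport equation (∂ₜ + u·∇)F = (∇u)F, i.e. ∂ₜF^{jα} + u^i ∂_i F^{jα} = (∂_i u^j) F^{iα}. -/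
open Set Function

/-- The conservative evolution ∂ₜ(ρF) − ∇×(ρFᵀ×u) = 0 of the deformation gradient,
together with the Piola identity div(ρFᵀ) = 0 and mass conservation, implies the
transport law (∂ₜ + u·∇)F = (∇u)F.
Here `dxρ i`, `dxu i · j` and `dxF i · j α` denote ∂_i ρ, ∂_i u^j and ∂_i F^{jα}. -/
theorem stmt_14
    (d : ℕ) (hd : 1 ≤ d)
    (ρ dtρ : ℝ → (Fin d → ℝ) → ℝ)
    (dxρ : Fin d → ℝ → (Fin d → ℝ) → ℝ)
    (u : ℝ → (Fin d → ℝ) → Fin d → ℝ)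
    (dxu : Fin d → ℝ → (Fin d → ℝ) → Fin d → ℝ)
    (F dtF : ℝ → (Fin d → ℝ) → Matrix (Fin d) (Fin d) ℝ)
    (dxF : Fin d → ℝ → (Fin d → ℝ) → Matrix (Fin d) (Fin d) ℝ)
    -- smoothness: the indicated partial derivatives exist
    (hdtρ : ∀ t x, HasDerivAt (fun s => ρ s x) (dtρ t x) t)
    (hdxρ : ∀ i t x, HasDerivAt (fun r => ρ t (update x i r)) (dxρ i t x) (x i))
    (hdxu : ∀ i t x j, HasDerivAt (fun r => u t (update x i r) j) (dxu i t x j) (x i))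
    (hdtF : ∀ t x j α, HasDerivAt (fun s => F s x j α) (dtF t x j α) t)
    (hdxF : ∀ i t x j α,
      HasDerivAt (fun r => F t (update x i r) j α) (dxF i t x j α) (x i))
    -- ρ > 0 and F invertible
    (hρpos : ∀ t x, 0 < ρ t x)
    (hFinv : ∀ t x, IsUnit (F t x))
    -- mass conservation ∂ₜρ + div(ρu) = 0
    (hmass : ∀ t x, dtρ t x + ∑ i, (dxρ i t x * u t x i + ρ t x * dxu i t x i) = 0)
    -- conservation law ∂ₜ(ρF^{jα}) + ∂_i(ρ(u^i F^{jα} − u^j F^{iα})) = 0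
    (hcons : ∀ t x j α,
      (dtρ t x * F t x j α + ρ t x * dtF t x j α)
        + ∑ i, (dxρ i t x * (u t x i * F t x j α - u t x j * F t x i α)
            + ρ t x * (dxu i t x i * F t x j α + u t x i * dxF i t x j α
                - dxu i t x j * F t x i α - u t x j * dxF i t x i α)) = 0)
    -- Piola identity ∂_i(ρF^{iα}) = 0
    (hpiola : ∀ t x α, ∑ i, (dxρ i t x * F t x i α + ρ t x * dxF i t x i α) = 0) :
    -- transport law ∂ₜF^{jα} + u^i ∂_i F^{jα} = (∂_i u^j) F^{iα}
    ∀ t x j α,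
      dtF t x j α + ∑ i, u t x i * dxF i t x j α
        = ∑ i, dxu i t x j * F t x i α := by
  intro t x j α
  have hρ : ρ t x ≠ 0 := (hρpos t x).ne'
  have h1 := hcons t x j α
  have h2 := hmass t x
  have h3 := hpiola t x α
  have h2' : dtρ t x + ((∑ i, dxρ i t x * u t x i) + ρ t x * ∑ i, dxu i t x i) = 0 := by
    rw [← h2]; rw [Finset.sum_add_distrib, Finset.mul_sum]
  have h3' : (∑ i, dxρ i t x * F t x i α) + ρ t x * ∑ i, dxF i t x i α = 0 := by
    rw [← h3]; rw [Finset.sum_add_distrib, Finset.mul_sum]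
  have h1' : dtρ t x * F t x j α + ρ t x * dtF t x j α
        + ((∑ i, dxρ i t x * u t x i) * F t x j α
          - u t x j * ∑ i, dxρ i t x * F t x i α)
        + ρ t x * ((∑ i, dxu i t x i) * F t x j α
          + (∑ i, u t x i * dxF i t x j α)
          - (∑ i, dxu i t x j * F t x i α)
          - u t x j * ∑ i, dxF i t x i α) = 0 := by
    rw [← h1]
    simp only [Finset.sum_add_distrib, Finset.sum_sub_distrib, Finset.sum_mul,
      Finset.mul_sum, mul_sub, mul_add, ]
    ring_nf
  have key : ρ t x * (dtF t x j α + (∑ i, u t x i * dxF i t x j α)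
      - ∑ i, dxu i t x j * F t x i α) = 0 := by
    linear_combination h1' - F t x j α * h2' + u t x j * h3'
  have := (mul_eq_zero.mp key).resolve_left hρ
  linarith
end
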